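/- Let e ≥ 3 be odd and k ≥ 1, and set ε = 0 if k is even and ε = 1 if k is odd. Then τ(2^{ek}) = |(1^{⌊ek/2⌋}, 1^{⌊ek/2⌋+ε}), (−(e+1)/2, 0)⟩, and this charged bipartition equals ã_{(1^k)}(|(∅, ∅), (−(e+1)/2, 0)⟩), i.e. it is obtained from the abacus of the charged empty bipartition by moving each of its first k e-periods one step to the right. In particular τ(2^{ek}) has depth k in the sl_∞-crystal and lies in the connected component whose source vertex is the empty bipartition. -/

import Mathlib

namespace GUnBranching

/-- A partition, given by its (0-indexed) weakly decreasing, eventually zero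
sequence of parts: `part k` is the (k+1)-st part `λ_{k+1}`. -/
structure Partition where
  part : ℕ → ℕ
  antitone : ∀ i j : ℕ, i ≤ j → part j ≤ part i
  eventually_zero : ∃ N : ℕ, ∀ n : ℕ, N ≤ n → part n = 0

namespace Partition

/-- The set of boxes (row, column) (0-indexed) of the Young diagram of a partition. -/
def boxSet (p : Partition) : Set (ℕ × ℕ) := {b | b.2 < p.part b.1}

/-- The size `|λ|` of a partition: the number of boxes of its Young diagram. -/
noncomputable def size (p : Partition) : ℕ := p.boxSet.ncard

/-- The β-set `β(λ) = {λ_k - k + 1 : k ≥ 1}` (0-indexed: `{part k - k : k ∈ ℕ}`). -/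
def betaSet (p : Partition) : Set ℤ := {z | ∃ k : ℕ, z = (p.part k : ℤ) - k}

/-- The charged β-set `{λ_k + s - k + 1 : k ≥ 1}` of `(λ, s)`. -/
def chargedBetaSet (p : Partition) (s : ℤ) : Set ℤ :=
  {z | ∃ k : ℕ, z = (p.part k : ℤ) + s - k}

/-- The number of (nonzero) parts of a partition. -/
noncomputable def length (p : Partition) : ℕ := {k : ℕ | p.part k ≠ 0}.ncard

end Partition

/-- The empty partition `∅`. -/
def emptyPartition : Partition :=
  ⟨fun _ => 0, fun _ _ _ => le_rfl, ⟨0, fun _ _ => rfl⟩⟩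

/-- The partition `3^a 2^b 1^c` (a parts equal to 3, b parts equal to 2, c parts equal to 1). -/
def threeTwoOne (a b c : ℕ) : Partition where
  part k := if k < a then 3 else if k < a + b then 2 else if k < a + b + c then 1 else 0
  antitone i j h := by (try dsimp only); split_ifs <;> omega
  eventually_zero := ⟨a + b + c, fun n hn => by (try dsimp only); split_ifs <;> omega⟩

/-- The column partition `1^m`. -/
def column (m : ℕ) : Partition := threeTwoOne 0 0 m

/-- The staircase partition `Δ_t = (t, t-1, …, 2, 1)`. -/
def staircase (t : ℕ) : Partition where
  part k := t - k
  antitone i j h := Nat.sub_le_sub_left h t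
  eventually_zero := ⟨t, fun n hn => Nat.sub_eq_zero_of_le hn⟩

/-- The partition `Δ_t ⊔ 1^r` (staircase with a column of `r` extra parts equal to 1). -/
def staircaseColumn (t r : ℕ) : Partition where
  part k := if k < t then t - k else if k < t + r then 1 else 0
  antitone i j h := by (try dsimp only); split_ifs <;> omega
  eventually_zero := ⟨t + r, fun n hn => by (try dsimp only); split_ifs <;> omega⟩

/-- `p ⊔ 1^r` : append `r` extra parts equal to 1 to the partition `p`. -/
noncomputable def appendOnes (p : Partition) (r : ℕ) : Partition where
  part k := max (p.part k) (if k < p.length + r then 1 else 0)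
  antitone i j h := max_le_max (p.antitone i j h) (by split_ifs <;> omega)
  eventually_zero := by
    obtain ⟨N, hN⟩ := p.eventually_zero
    refine ⟨max N (p.length + r), fun n hn => ?_⟩
    have h1 : p.part n = 0 := hN n (le_trans (le_max_left _ _) hn)
    have h2 : ¬ n < p.length + r := by
      have := le_trans (le_max_right N (p.length + r)) hn
      omega
    simp [h1, h2]

/-- `mu` is obtained from `lam` by removing one rim `e`-hook: on β-sets, a bead `x`
with an empty spot at `x - e` is moved to `x - e`. -/
def RemoveHook (e : ℕ) (lam mu : Partition) : Prop :=
  ∃ x : ℤ, x ∈ lam.betaSet ∧ (x - e) ∉ lam.betaSet ∧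
    mu.betaSet = insert (x - e) (lam.betaSet \ {x})

/-- A partition is an `e`-core if no rim `e`-hook can be removed from it. -/
def IsECore (e : ℕ) (p : Partition) : Prop := ∀ mu : Partition, ¬ RemoveHook e p mu

/-- `core` is the `e`-core of `lam`: it is obtained from `lam` by repeatedly removing
rim `e`-hooks, and no further rim `e`-hook can be removed. -/
def HasECore (e : ℕ) (lam core : Partition) : Prop :=
  Relation.ReflTransGen (RemoveHook e) lam core ∧ IsECore e core

/-- `lam` and `mu` have the same `e`-core. -/
def SameECore (e : ℕ) (lam mu : Partition) : Prop :=
  ∃ core : Partition, HasECore e lam core ∧ HasECore e mu core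

/-- `(q1, q2)` is the 2-quotient of `lam`: the odd (resp. even) β-numbers of `lam`,
transformed by `v ↦ (v+1)/2` (resp. `v ↦ v/2`), form the β-set of `q1` (resp. `q2`)
for a suitable charge. -/
def IsTwoQuotient (lam q1 q2 : Partition) : Prop :=
  (∃ c : ℤ, q1.chargedBetaSet c = {z : ℤ | 2 * z - 1 ∈ lam.betaSet}) ∧
  (∃ c : ℤ, q2.chargedBetaSet c = {z : ℤ | 2 * z ∈ lam.betaSet})

/-- The charge `s_t`: `(-(t+1+e)/2, t/2)` for even `t`, `(-(t+1)/2, (t+e)/2)` for odd `t`. -/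
def tauCharge (e t : ℕ) : ℤ × ℤ :=
  if t % 2 = 0 then (-(((t : ℤ) + 1 + e) / 2), (t : ℤ) / 2)
  else (-(((t : ℤ) + 1) / 2), ((t : ℤ) + e) / 2)

/-- `bp` is the twisted 2-quotient `τ(lam)` of `lam`, a partition with 2-core `Δ_t`:
it is the 2-quotient for even `t` and the swapped 2-quotient for odd `t`; the
corresponding charge is `tauCharge e t`. -/
def IsTwistedQuotient (t : ℕ) (lam : Partition) (bp : Partition × Partition) : Prop :=
  HasECore 2 lam (staircase t) ∧
  (if t % 2 = 0 then IsTwoQuotient lam bp.1 bp.2 else IsTwoQuotient lam bp.2 bp.1)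

/-- The abacus of a charged bipartition: positions are (column, row) where row
`0 : Fin 2` is the bottom row (first component, charge `s.1`) and row `1 : Fin 2`
the top row (second component, charge `s.2`). -/
def abacus (bp : Partition × Partition) (s : ℤ × ℤ) : Set (ℤ × Fin 2) :=
  {b | b.1 ∈ (if b.2 = (0 : Fin 2) then bp.1.chargedBetaSet s.1 else bp.2.chargedBetaSet s.2)}

/-- `P` is an `e`-period of the abacus `A`: beads `(x, r 0), (x-1, r 1), …, (x-e+1, r (e-1))`
of `A` where `x` is the largest column containing a bead of `A`, `r i = 0` (bottom row)
whenever `(x - i, bottom)` is a bead of `A` (for `i < e-1`), and once in the bottom row the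
period stays in the bottom row. -/
def IsEPeriodOf (e : ℕ) (A P : Set (ℤ × Fin 2)) : Prop :=
  ∃ (x : ℤ) (r : ℕ → Fin 2),
    P = {b | ∃ i : ℕ, i < e ∧ b = ((x - i : ℤ), r i)} ∧
    (∀ i : ℕ, i < e → ((x - i : ℤ), r i) ∈ A) ∧
    (∀ b ∈ A, b.1 ≤ x) ∧
    (∀ i : ℕ, i + 1 < e → ((x - i : ℤ), (0 : Fin 2)) ∈ A → r i = 0) ∧
    (∀ i : ℕ, i + 1 < e → r i = 0 → r (i + 1) = 0)

/-- `P 0, P 1, P 2, …` is the sequence of `e`-periods of `A`: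
each `P k` is the `e`-period of `A` minus the previous periods. -/
def IsPeriodSeq (e : ℕ) (A : Set (ℤ × Fin 2)) (P : ℕ → Set (ℤ × Fin 2)) : Prop :=
  ∀ k : ℕ, IsEPeriodOf e (A \ ⋃ i ∈ Finset.range k, P i) (P k)

/-- The abacus `A` is totally `e`-periodic: the `k`-th `e`-period exists for every `k`. -/
def TotallyPeriodic (e : ℕ) (A : Set (ℤ × Fin 2)) : Prop :=
  ∃ P : ℕ → Set (ℤ × Fin 2), IsPeriodSeq e A P

/-- `P` is the `(k+1)`-st `e`-period of `A` (so `k = 0` gives the first `e`-period). -/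
def IsKthPeriod (e : ℕ) (A : Set (ℤ × Fin 2)) (k : ℕ) (P : Set (ℤ × Fin 2)) : Prop :=
  ∃ Q : ℕ → Set (ℤ × Fin 2),
    (∀ i : ℕ, i ≤ k → IsEPeriodOf e (A \ ⋃ j ∈ Finset.range i, Q j) (Q i)) ∧ Q k = P

/-- Shift a set of abacus positions one step to the right. -/
def shiftRight (P : Set (ℤ × Fin 2)) : Set (ℤ × Fin 2) := {b | (b.1 - 1, b.2) ∈ P}

/-- Edge of the `sl_∞`-crystal moving the `(k+1)`-st `e`-period one step to the right:
the shifted period must again be the `(k+1)`-st `e`-period of the resulting abacus. -/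
def SlInfEdgeAt (e : ℕ) (s : ℤ × ℤ) (k : ℕ) (lam mu : Partition × Partition) : Prop :=
  TotallyPeriodic e (abacus lam s) ∧ TotallyPeriodic e (abacus mu s) ∧
  ∃ P : Set (ℤ × Fin 2),
    IsKthPeriod e (abacus lam s) k P ∧
    abacus mu s = (abacus lam s \ P) ∪ shiftRight P ∧
    IsKthPeriod e (abacus mu s) k (shiftRight P)

/-- Edge of the `sl_∞`-crystal. -/
def SlInfEdge (e : ℕ) (s : ℤ × ℤ) (lam mu : Partition × Partition) : Prop :=
  ∃ k : ℕ, SlInfEdgeAt e s k lam mu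

/-- A source vertex of the `sl_∞`-crystal: a vertex (totally `e`-periodic abacus)
with no incoming edge. -/
def IsSlInfSource (e : ℕ) (s : ℤ × ℤ) (bp : Partition × Partition) : Prop :=
  TotallyPeriodic e (abacus bp s) ∧ ∀ lam : Partition × Partition, ¬ SlInfEdge e s lam bp

/-- A box of a bipartition: (component, row, column), all 0-indexed
(component `0 : Fin 2` is the first component `λ¹`). -/
abbrev Box := Fin 2 × ℕ × ℕ

/-- The component of a bipartition indexed by `j : Fin 2`. -/
def comp (bp : Partition × Partition) (j : Fin 2) : Partition :=
  if j = 0 then bp.1 else bp.2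

/-- `b` is a box of the bipartition `bp`. -/
def IsBoxOf (bp : Partition × Partition) (b : Box) : Prop :=
  b.2.2 < (comp bp b.1).part b.2.1

/-- The (charged) content `ct(b) = y - x + s_j` of a box `b = (j, x, y)`. -/
def content (s : ℤ × ℤ) (b : Box) : ℤ :=
  (b.2.2 : ℤ) - (b.2.1 : ℤ) + (if b.1 = 0 then s.1 else s.2)

/-- `b` is an addable box of the bipartition `bp`. -/
def IsAddable (bp : Partition × Partition) (b : Box) : Prop :=
  b.2.2 = (comp bp b.1).part b.2.1 ∧
  (b.2.1 = 0 ∨ (comp bp b.1).part b.2.1 < (comp bp b.1).part (b.2.1 - 1))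

/-- `b` is a removable box of the bipartition `bp`. -/
def IsRemovable (bp : Partition × Partition) (b : Box) : Prop :=
  b.2.2 + 1 = (comp bp b.1).part b.2.1 ∧
  (comp bp b.1).part (b.2.1 + 1) < (comp bp b.1).part b.2.1

/-- The total order on addable/removable boxes: `b ≤ b'` iff `b = b'`, or
`ct(b) < ct(b')`, or the contents are equal, `b` lies in the second component and
`b'` in the first. -/
def boxLE (s : ℤ × ℤ) (b b' : Box) : Prop :=
  b = b' ∨ content s b < content s b' ∨
    (content s b = content s b' ∧ b.1 = 1 ∧ b'.1 = 0)

/-- The set of addable or removable boxes of residue `i` (the letters of the `i`-word). -/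
def IWord (e : ℕ) (s : ℤ × ℤ) (bp : Partition × Partition) (i : ZMod e) : Set Box :=
  {b | (IsAddable bp b ∨ IsRemovable bp b) ∧ ((content s b : ZMod e) = i)}

/-- A removable box of residue `i` surviving the Kashiwara cancellation: reading the
`i`-word in increasing order and cancelling each removable box with a following addable
box (recursively cancelling adjacent removable-addable pairs), `b` is not cancelled.
Equivalently, every final segment of the `i`-word starting at `b` contains strictly
more removable than addable boxes. -/
def SurvivingRemovable (e : ℕ) (s : ℤ × ℤ) (bp : Partition × Partition)
    (i : ZMod e) (b : Box) : Prop :=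
  b ∈ IWord e s bp i ∧ IsRemovable bp b ∧
  ∀ c ∈ IWord e s bp i, boxLE s b c →
    {d : Box | d ∈ IWord e s bp i ∧ IsAddable bp d ∧ boxLE s b d ∧ boxLE s d c}.ncard <
    {d : Box | d ∈ IWord e s bp i ∧ IsRemovable bp d ∧ boxLE s b d ∧ boxLE s d c}.ncard

/-- The good removable `i`-box: the smallest removable `i`-box surviving the
Kashiwara cancellation. -/
def IsGoodRemovable (e : ℕ) (s : ℤ × ℤ) (bp : Partition × Partition)
    (i : ZMod e) (b : Box) : Prop :=
  SurvivingRemovable e s bp i b ∧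
  ∀ b' : Box, SurvivingRemovable e s bp i b' → boxLE s b b'

/-- An addable box of residue `i` surviving the Kashiwara cancellation. -/
def SurvivingAddable (e : ℕ) (s : ℤ × ℤ) (bp : Partition × Partition)
    (i : ZMod e) (b : Box) : Prop :=
  b ∈ IWord e s bp i ∧ IsAddable bp b ∧
  ∀ c ∈ IWord e s bp i, boxLE s c b →
    {d : Box | d ∈ IWord e s bp i ∧ IsRemovable bp d ∧ boxLE s c d ∧ boxLE s d b}.ncard <
    {d : Box | d ∈ IWord e s bp i ∧ IsAddable bp d ∧ boxLE s c d ∧ boxLE s d b}.ncard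

/-- The good addable `i`-box: the largest addable `i`-box surviving the
Kashiwara cancellation. -/
def IsGoodAddable (e : ℕ) (s : ℤ × ℤ) (bp : Partition × Partition)
    (i : ZMod e) (b : Box) : Prop :=
  SurvivingAddable e s bp i b ∧
  ∀ b' : Box, SurvivingAddable e s bp i b' → boxLE s b' b

/-- A source vertex of the `ŝl_e`-crystal: no good removable `i`-box for any residue `i`. -/
def IsSlESource (e : ℕ) (s : ℤ × ℤ) (bp : Partition × Partition) : Prop :=
  ∀ (i : ZMod e) (b : Box), ¬ IsGoodRemovable e s bp i b

/-- `bp'` is obtained from `bp` by adding the box `b`. -/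
def AddBox (bp : Partition × Partition) (b : Box) (bp' : Partition × Partition) : Prop :=
  if b.1 = 0 then
    bp'.2 = bp.2 ∧ bp'.1.part = Function.update bp.1.part b.2.1 (bp.1.part b.2.1 + 1)
  else
    bp'.1 = bp.1 ∧ bp'.2.part = Function.update bp.2.part b.2.1 (bp.2.part b.2.1 + 1)

/-- Dominance order: `Dominates mu la` means `la ⊴ mu`. -/
def Dominates (mu la : Partition) : Prop :=
  ∀ k : ℕ, ∑ i ∈ Finset.range k, la.part i ≤ ∑ i ∈ Finset.range k, mu.part i

/-! ### Auxiliary lemmas -/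

theorem Partition.ext' {p q : Partition} (h : p.part = q.part) : p = q := by
  cases p; cases q; cases h; rfl

theorem fin2cases (ρ : Fin 2) : ρ = 0 ∨ ρ = 1 := by fin_cases ρ <;> simp

theorem column_part (r j : ℕ) : (column r).part j = if j < r then 1 else 0 := by
  simp [column, threeTwoOne]

theorem mem_column_chargedBeta (r : ℕ) (c z : ℤ) :
    z ∈ (column r).chargedBetaSet c ↔ z ≤ c + 1 ∧ z ≠ c + 1 - r := by
  constructor
  · rintro ⟨j, rfl⟩
    rw [column_part]
    split_ifs with hj <;> constructor <;> push_cast <;> omega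
  · rintro ⟨h1, h2⟩
    by_cases hz : c + 1 - r < z
    · exact ⟨(c + 1 - z).toNat, by rw [column_part, if_pos (by omega)]; omega⟩
    · exact ⟨(c - z).toNat, by rw [column_part, if_neg (by omega)]; omega⟩

theorem mem_empty_chargedBeta (c z : ℤ) :
    z ∈ emptyPartition.chargedBetaSet c ↔ z ≤ c := by
  constructor
  · rintro ⟨j, rfl⟩; simp only [emptyPartition]; omega
  · intro h; exact ⟨(c - z).toNat, by simp [emptyPartition]; omega⟩

theorem twoRows_part (m j : ℕ) : (threeTwoOne 0 m 0).part j = if j < m then 2 else 0 := by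
  simp only [threeTwoOne, Nat.not_lt_zero, if_false, Nat.zero_add, Nat.add_zero]
  split_ifs <;> rfl

theorem mem_twoRows_beta (m : ℕ) (z : ℤ) :
    z ∈ (threeTwoOne 0 m 0).betaSet ↔ z ≤ 2 ∧ z ≠ 2 - m ∧ z ≠ 1 - m := by
  constructor
  · rintro ⟨j, rfl⟩
    rw [twoRows_part]
    split_ifs with hj <;> refine ⟨?_, ?_, ?_⟩ <;> push_cast <;> omega
  · rintro ⟨h1, h2, h3⟩
    by_cases hz : 1 - (m : ℤ) < z
    · exact ⟨(2 - z).toNat, by rw [twoRows_part, if_pos (by omega)]; omega⟩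
    · exact ⟨(-z).toNat, by rw [twoRows_part, if_neg (by omega)]; omega⟩

theorem mem_staircase0_beta (z : ℤ) : z ∈ (staircase 0).betaSet ↔ z ≤ 0 := by
  constructor
  · rintro ⟨j, rfl⟩; simp [staircase]
  · intro h; exact ⟨(-z).toNat, by simp [staircase]; omega⟩
/-- Simultaneous recursion for the numbers `T i = ⌈ei/2⌉` and `B i = ⌊ei/2⌋`
of top-row resp. bottom-row beads used by the first `i` periods (where `e = 2h-1`). -/
def TB (h : ℕ) : ℕ → ℕ × ℕ
  | 0 => (0, 0)
  | i + 1 => (h + (TB h i).2, (TB h i).1 + h - 1)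

/-- Number of top-row beads in the first `i` periods. -/
def Tf (h i : ℕ) : ℕ := (TB h i).1
/-- Number of bottom-row beads in the first `i` periods. -/
def Bf (h i : ℕ) : ℕ := (TB h i).2

theorem Tf_zero (h : ℕ) : Tf h 0 = 0 := rfl
theorem Bf_zero (h : ℕ) : Bf h 0 = 0 := rfl
theorem Tf_succ (h i : ℕ) : Tf h (i + 1) = h + Bf h i := rfl
theorem Bf_succ (h i : ℕ) (hh : 2 ≤ h) : Bf h (i + 1) + 1 = Tf h i + h := by
  show (TB h i).1 + h - 1 + 1 = (TB h i).1 + h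
  omega

theorem TB_close (h : ℕ) (hh : 2 ≤ h) (i : ℕ) :
    Bf h i ≤ Tf h i ∧ Tf h i ≤ Bf h i + 1 := by
  induction i with
  | zero => simp [Tf_zero, Bf_zero]
  | succ n ih =>
    have h1 := Tf_succ h n
    have h2 := Bf_succ h n hh
    omega

theorem Tf_lt_succ (h : ℕ) (hh : 2 ≤ h) (i : ℕ) : Tf h i < Tf h (i + 1) := by
  have h1 := Tf_succ h i
  have h2 := TB_close h hh i
  omega

theorem Bf_lt_succ (h : ℕ) (hh : 2 ≤ h) (i : ℕ) : Bf h i < Bf h (i + 1) := by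
  have h1 := Bf_succ h i hh
  have h2 := TB_close h hh i
  omega

theorem Tf_mono (h : ℕ) (hh : 2 ≤ h) {i j : ℕ} (hij : i ≤ j) : Tf h i ≤ Tf h j := by
  obtain ⟨d, rfl⟩ := Nat.exists_eq_add_of_le hij
  induction d with
  | zero => exact le_rfl
  | succ n ih => exact le_trans (ih (Nat.le_add_right _ _)) (le_of_lt (by rw [← Nat.add_assoc]; exact Tf_lt_succ h hh _))

theorem Bf_mono (h : ℕ) (hh : 2 ≤ h) {i j : ℕ} (hij : i ≤ j) : Bf h i ≤ Bf h j := by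
  obtain ⟨d, rfl⟩ := Nat.exists_eq_add_of_le hij
  induction d with
  | zero => exact le_rfl
  | succ n ih => exact le_trans (ih (Nat.le_add_right _ _)) (le_of_lt (by rw [← Nat.add_assoc]; exact Bf_lt_succ h hh _))

theorem TB_total (h : ℕ) (hh : 2 ≤ h) (i : ℕ) :
    Tf h i + Bf h i = (2 * h - 1) * i ∧ Tf h i = Bf h i + i % 2 := by
  induction i with
  | zero => simp [Tf_zero, Bf_zero]
  | succ n ih =>
    have h1 := Tf_succ h n
    have h2 := Bf_succ h n hh
    have h3 : (2 * h - 1) * (n + 1) = (2 * h - 1) * n + (2 * h - 1) := by ring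
    omega
/-- Model abacus: the abacus of `(1^{B j}, 1^{T j})` with charge `(-h, 0)`. -/
def modelAb (h j : ℕ) : Set (ℤ × Fin 2) :=
  {b | if b.2 = 0 then b.1 ≤ 1 - (h : ℤ) ∧ b.1 ≠ 1 - (h : ℤ) - Bf h j
       else b.1 ≤ 1 ∧ b.1 ≠ 1 - (Tf h j : ℤ)}

/-- The `(i+1)`-st `e`-period of the model abacus of the empty bipartition. -/
def periodP (h i : ℕ) : Set (ℤ × Fin 2) :=
  {b | ∃ m : ℕ, m < 2 * h - 1 ∧
    b = ((-(Tf h i : ℤ) - (m : ℕ) : ℤ),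
         if m < Tf h (i + 1) - Tf h i then (1 : Fin 2) else 0)}

/-- The period sequence of the `j`-th model abacus: the first `j` periods are
shifted one step right, the rest are the periods of the empty abacus. -/
def Qseq (h j i : ℕ) : Set (ℤ × Fin 2) :=
  if i < j then shiftRight (periodP h i) else periodP h i

/-- Remainder of the `j`-th model abacus after removing its first `i` periods. -/
def remSet (h j i : ℕ) : Set (ℤ × Fin 2) :=
  {b | if b.2 = 0 then
         b.1 ≤ 1 - (h : ℤ) - Bf h i ∧ b.1 ≠ 1 - (h : ℤ) - Bf h (max i j)
       else b.1 ≤ 1 - (Tf h i : ℤ) ∧ b.1 ≠ 1 - (Tf h (max i j) : ℤ)}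

theorem remSet_zero (h j : ℕ) : remSet h j 0 = modelAb h j := by
  ext b
  simp only [remSet, modelAb, Tf_zero, Bf_zero, Nat.max_eq_right (Nat.zero_le j),
    Set.mem_setOf_eq, Nat.cast_zero]
  split_ifs <;> constructor <;> rintro ⟨h1, h2⟩ <;> constructor <;> omega

theorem mem_periodP (h : ℕ) (hh : 2 ≤ h) (i : ℕ) (z : ℤ) (ρ : Fin 2) :
    (z, ρ) ∈ periodP h i ↔
      (ρ = 1 ∧ -(Tf h (i + 1) : ℤ) < z ∧ z ≤ -(Tf h i : ℤ)) ∨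
      (ρ = 0 ∧ 1 - (h : ℤ) - Bf h (i + 1) ≤ z ∧ z ≤ -(h : ℤ) - Bf h i) := by
  have hT1 := Tf_succ h i
  have hB1 := Bf_succ h i hh
  have hcl := TB_close h hh i
  constructor
  · rintro ⟨m, hm, heq⟩
    rw [Prod.mk.injEq] at heq
    obtain ⟨hz, hρ⟩ := heq
    split_ifs at hρ with hc
    · left; exact ⟨hρ, by omega, by omega⟩
    · right; exact ⟨hρ, by omega, by omega⟩
  · rintro (⟨hρ, h1, h2⟩ | ⟨hρ, h1, h2⟩)
    · refine ⟨(-(Tf h i : ℤ) - z).toNat, by omega, ?_⟩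
      rw [Prod.mk.injEq]
      refine ⟨by omega, ?_⟩
      rw [if_pos (by omega)]
      exact hρ
    · refine ⟨(-(Tf h i : ℤ) - z).toNat, by omega, ?_⟩
      rw [Prod.mk.injEq]
      refine ⟨by omega, ?_⟩
      rw [if_neg (by omega)]
      exact hρ

theorem mem_shift_periodP (h : ℕ) (hh : 2 ≤ h) (i : ℕ) (z : ℤ) (ρ : Fin 2) :
    (z, ρ) ∈ shiftRight (periodP h i) ↔
      (ρ = 1 ∧ 1 - (Tf h (i + 1) : ℤ) < z ∧ z ≤ 1 - (Tf h i : ℤ)) ∨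
      (ρ = 0 ∧ 2 - (h : ℤ) - Bf h (i + 1) ≤ z ∧ z ≤ 1 - (h : ℤ) - Bf h i) := by
  show (z - 1, ρ) ∈ periodP h i ↔ _
  rw [mem_periodP h hh]
  constructor <;> rintro (⟨hρ, h1, h2⟩ | ⟨hρ, h1, h2⟩)
  · exact Or.inl ⟨hρ, by omega, by omega⟩
  · exact Or.inr ⟨hρ, by omega, by omega⟩
  · exact Or.inl ⟨hρ, by omega, by omega⟩
  · exact Or.inr ⟨hρ, by omega, by omega⟩
theorem rem (h : ℕ) (hh : 2 ≤ h) (j i : ℕ) :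
    modelAb h j \ ⋃ m ∈ Finset.range i, Qseq h j m = remSet h j i := by
  induction i with
  | zero => simp [remSet_zero]
  | succ n ih =>
    have hstep : modelAb h j \ ⋃ m ∈ Finset.range (n + 1), Qseq h j m =
        (modelAb h j \ ⋃ m ∈ Finset.range n, Qseq h j m) \ Qseq h j n := by
      rw [Set.diff_diff]
      congr 1
      rw [Finset.range_add_one, Finset.set_biUnion_insert, Set.union_comm]
    rw [hstep, ih]
    have hTm := Tf_lt_succ h hh n
    have hBm := Bf_lt_succ h hh n
    by_cases hnj : n < j
    · have hmax1 : max n j = j := by omega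
      have hmax2 : max (n + 1) j = j := by omega
      have hTj : Tf h (n + 1) ≤ Tf h j := Tf_mono h hh (by omega)
      have hBj : Bf h (n + 1) ≤ Bf h j := Bf_mono h hh (by omega)
      ext ⟨z, ρ⟩
      simp only [Set.mem_diff, remSet, Set.mem_setOf_eq, Qseq, if_pos hnj, hmax1, hmax2,
        mem_shift_periodP h hh]
      rcases fin2cases ρ with rfl | rfl <;>
        simp only [show ((0:Fin 2) = 1) ↔ False from by decide,
             show ((1:Fin 2) = 0) ↔ False from by decide,
             show ((0:Fin 2) = 0) ↔ True from by decide,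
             show ((1:Fin 2) = 1) ↔ True from by decide,
             if_true, if_false, true_and, false_and, false_or, or_false] <;>
        omega
    · have hmax1 : max n j = n := by omega
      have hmax2 : max (n + 1) j = n + 1 := by omega
      ext ⟨z, ρ⟩
      simp only [Set.mem_diff, remSet, Set.mem_setOf_eq, Qseq, if_neg hnj, hmax1, hmax2,
        mem_periodP h hh]
      rcases fin2cases ρ with rfl | rfl <;>
        simp only [show ((0:Fin 2) = 1) ↔ False from by decide,
             show ((1:Fin 2) = 0) ↔ False from by decide,
             show ((0:Fin 2) = 0) ↔ True from by decide,
             show ((1:Fin 2) = 1) ↔ True from by decide,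
             if_true, if_false, true_and, false_and, false_or, or_false] <;>
        omega
theorem shift_periodP_form (h i : ℕ) :
    shiftRight (periodP h i) =
      {b : ℤ × Fin 2 | ∃ m : ℕ, m < 2 * h - 1 ∧
        b = ((1 - (Tf h i : ℤ) - (m : ℕ) : ℤ),
             if m < Tf h (i + 1) - Tf h i then (1 : Fin 2) else 0)} := by
  ext ⟨z, ρ⟩
  show (z - 1, ρ) ∈ periodP h i ↔ _
  constructor
  · rintro ⟨m, hm, heq⟩
    rw [Prod.mk.injEq] at heq
    exact ⟨m, hm, by rw [Prod.mk.injEq]; exact ⟨by omega, heq.2⟩⟩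
  · rintro ⟨m, hm, heq⟩
    rw [Prod.mk.injEq] at heq
    exact ⟨m, hm, by rw [Prod.mk.injEq]; exact ⟨by omega, heq.2⟩⟩

theorem per (h : ℕ) (hh : 2 ≤ h) (j i : ℕ) :
    IsEPeriodOf (2 * h - 1) (modelAb h j \ ⋃ m ∈ Finset.range i, Qseq h j m)
      (Qseq h j i) := by
  rw [rem h hh j i]
  have hT1 := Tf_succ h i
  have hB1 := Bf_succ h i hh
  have hcl := TB_close h hh i
  have hTm := Tf_lt_succ h hh i
  have hBm := Bf_lt_succ h hh i
  by_cases hij : i < j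
  · have hmax : max i j = j := by omega
    have hTj : Tf h (i + 1) ≤ Tf h j := Tf_mono h hh (by omega)
    have hBj : Bf h (i + 1) ≤ Bf h j := Bf_mono h hh (by omega)
    rw [Qseq, if_pos hij]
    refine ⟨1 - (Tf h i : ℤ), fun m => if m < Tf h (i + 1) - Tf h i then 1 else 0,
      shift_periodP_form h i, ?_, ?_, ?_, ?_⟩
    · intro m hm
      by_cases hc : m < Tf h (i + 1) - Tf h i
      · simp only [if_pos hc, remSet, Set.mem_setOf_eq, hmax,
          show ((1 : Fin 2) = 0) ↔ False from by decide, if_false]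
        constructor <;> omega
      · simp only [if_neg hc, remSet, Set.mem_setOf_eq, hmax,
          show ((0 : Fin 2) = 0) ↔ True from by decide, if_true]
        constructor <;> omega
    · rintro ⟨z, ρ⟩ hb
      simp only [remSet, Set.mem_setOf_eq, hmax] at hb
      rcases fin2cases ρ with rfl | rfl <;>
        simp only [show ((0 : Fin 2) = 0) ↔ True from by decide,
          show ((1 : Fin 2) = 0) ↔ False from by decide, if_true, if_false] at hb <;>
        omega
    · intro m hm hmem
      simp only [remSet, Set.mem_setOf_eq, hmax,
        show ((0 : Fin 2) = 0) ↔ True from by decide, if_true] at hmem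
      show (if m < Tf h (i + 1) - Tf h i then (1 : Fin 2) else 0) = 0
      rw [if_neg (by omega)]
    · intro m hm h0
      have h0' : (if m < Tf h (i + 1) - Tf h i then (1 : Fin 2) else 0) = 0 := h0
      show (if m + 1 < Tf h (i + 1) - Tf h i then (1 : Fin 2) else 0) = 0
      by_cases hc : m < Tf h (i + 1) - Tf h i
      · rw [if_pos hc] at h0'; exact absurd h0' (by decide)
      · rw [if_neg (by omega)]
  · have hmax : max i j = i := by omega
    rw [Qseq, if_neg hij]
    refine ⟨-(Tf h i : ℤ), fun m => if m < Tf h (i + 1) - Tf h i then 1 else 0,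
      rfl, ?_, ?_, ?_, ?_⟩
    · intro m hm
      by_cases hc : m < Tf h (i + 1) - Tf h i
      · simp only [if_pos hc, remSet, Set.mem_setOf_eq, hmax,
          show ((1 : Fin 2) = 0) ↔ False from by decide, if_false]
        constructor <;> omega
      · simp only [if_neg hc, remSet, Set.mem_setOf_eq, hmax,
          show ((0 : Fin 2) = 0) ↔ True from by decide, if_true]
        constructor <;> omega
    · rintro ⟨z, ρ⟩ hb
      simp only [remSet, Set.mem_setOf_eq, hmax] at hb
      rcases fin2cases ρ with rfl | rfl <;>
        simp only [show ((0 : Fin 2) = 0) ↔ True from by decide,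
          show ((1 : Fin 2) = 0) ↔ False from by decide, if_true, if_false] at hb <;>
        omega
    · intro m hm hmem
      simp only [remSet, Set.mem_setOf_eq, hmax,
        show ((0 : Fin 2) = 0) ↔ True from by decide, if_true] at hmem
      show (if m < Tf h (i + 1) - Tf h i then (1 : Fin 2) else 0) = 0
      rw [if_neg (by omega)]
    · intro m hm h0
      have h0' : (if m < Tf h (i + 1) - Tf h i then (1 : Fin 2) else 0) = 0 := h0
      show (if m + 1 < Tf h (i + 1) - Tf h i then (1 : Fin 2) else 0) = 0
      by_cases hc : m < Tf h (i + 1) - Tf h i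
      · rw [if_pos hc] at h0'; exact absurd h0' (by decide)
      · rw [if_neg (by omega)]
theorem Qseq_zero (h i : ℕ) : Qseq h 0 i = periodP h i := if_neg (Nat.not_lt_zero i)

theorem Qseq_self (h j : ℕ) : Qseq h j j = periodP h j := if_neg (lt_irrefl j)

theorem Qseq_lt (h j i : ℕ) (hij : i < j) : Qseq h j i = shiftRight (periodP h i) :=
  if_pos hij

theorem abacus_columns (h r0 r1 : ℕ) :
    abacus (column r0, column r1) (-(h : ℤ), 0) =
      {b : ℤ × Fin 2 | if b.2 = 0 then b.1 ≤ 1 - (h : ℤ) ∧ b.1 ≠ 1 - (h : ℤ) - r0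
                       else b.1 ≤ 1 ∧ b.1 ≠ 1 - (r1 : ℤ)} := by
  ext ⟨z, ρ⟩
  rcases fin2cases ρ with rfl | rfl <;>
    simp only [abacus, Set.mem_setOf_eq, show ((0 : Fin 2) = 0) ↔ True from by decide,
      show ((1 : Fin 2) = 0) ↔ False from by decide, if_true, if_false] <;>
    rw [mem_column_chargedBeta] <;> constructor <;> rintro ⟨h1, h2⟩ <;>
    constructor <;> omega

theorem abacus_model (h j : ℕ) :
    abacus (column (Bf h j), column (Tf h j)) (-(h : ℤ), 0) = modelAb h j := by
  rw [abacus_columns]; rfl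

theorem abacus_empty (h : ℕ) :
    abacus (emptyPartition, emptyPartition) (-(h : ℤ), 0) = modelAb h 0 := by
  ext ⟨z, ρ⟩
  rcases fin2cases ρ with rfl | rfl <;>
    simp only [abacus, modelAb, Set.mem_setOf_eq, show ((0 : Fin 2) = 0) ↔ True from by decide,
      show ((1 : Fin 2) = 0) ↔ False from by decide, if_true, if_false, Tf_zero, Bf_zero] <;>
    rw [mem_empty_chargedBeta] <;> push_cast <;> omega

theorem ushift (h : ℕ) (hh : 2 ≤ h) (n : ℕ) :
    ⋃ m ∈ Finset.range n, shiftRight (periodP h m) =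
      {b : ℤ × Fin 2 | if b.2 = 0 then 1 - (h : ℤ) - Bf h n < b.1 ∧ b.1 ≤ 1 - (h : ℤ)
                       else 1 - (Tf h n : ℤ) < b.1 ∧ b.1 ≤ 1} := by
  induction n with
  | zero =>
    ext ⟨z, ρ⟩
    rw [show (⋃ m ∈ Finset.range 0, shiftRight (periodP h m)) = (∅ : Set (ℤ × Fin 2)) from
      by simp]
    simp only [Set.mem_empty_iff_false, Set.mem_setOf_eq, false_iff, Tf_zero, Bf_zero]
    rcases fin2cases ρ with rfl | rfl
    · rw [if_pos rfl]; push_cast; omega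
    · rw [if_neg (by decide)]; push_cast; omega
  | succ n ih =>
    rw [Finset.range_add_one, Finset.set_biUnion_insert, ih]
    have hT1 := Tf_succ h n
    have hB1 := Bf_succ h n hh
    have hcl := TB_close h hh n
    ext ⟨z, ρ⟩
    simp only [Set.mem_union, Set.mem_setOf_eq, mem_shift_periodP h hh]
    rcases fin2cases ρ with rfl | rfl <;>
      simp only [show ((0 : Fin 2) = 0) ↔ True from by decide,
        show ((1 : Fin 2) = 0) ↔ False from by decide,
        show ((0 : Fin 2) = 1) ↔ False from by decide,
        show ((1 : Fin 2) = 1) ↔ True from by decide,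
        if_true, if_false, true_and, false_and, false_or, or_false] <;>
      omega

theorem main_union (h : ℕ) (hh : 2 ≤ h) (k : ℕ) :
    modelAb h k =
      (modelAb h 0 \ ⋃ i ∈ Finset.range k, periodP h i) ∪
        ⋃ i ∈ Finset.range k, shiftRight (periodP h i) := by
  have h1 : (⋃ i ∈ Finset.range k, periodP h i) = ⋃ i ∈ Finset.range k, Qseq h 0 i := by
    refine Set.iUnion₂_congr fun i _ => (Qseq_zero h i).symm
  rw [h1, rem h hh 0 k, ushift h hh k]
  ext ⟨z, ρ⟩
  have hmax : max k 0 = k := Nat.max_eq_left (Nat.zero_le k)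
  simp only [Set.mem_union, Set.mem_setOf_eq, remSet, modelAb, hmax]
  rcases fin2cases ρ with rfl | rfl <;>
    simp only [show ((0 : Fin 2) = 0) ↔ True from by decide,
      show ((1 : Fin 2) = 0) ↔ False from by decide, if_true, if_false] <;>
    omega

theorem edge_union (h : ℕ) (hh : 2 ≤ h) (j : ℕ) :
    modelAb h (j + 1) = (modelAb h j \ periodP h j) ∪ shiftRight (periodP h j) := by
  have hT1 := Tf_succ h j
  have hB1 := Bf_succ h j hh
  have hcl := TB_close h hh j
  have hTm := Tf_lt_succ h hh j
  have hBm := Bf_lt_succ h hh j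
  ext ⟨z, ρ⟩
  simp only [Set.mem_union, Set.mem_diff, Set.mem_setOf_eq, modelAb,
    mem_periodP h hh, mem_shift_periodP h hh]
  rcases fin2cases ρ with rfl | rfl <;>
    simp only [show ((0 : Fin 2) = 0) ↔ True from by decide,
      show ((1 : Fin 2) = 0) ↔ False from by decide,
      show ((0 : Fin 2) = 1) ↔ False from by decide,
      show ((1 : Fin 2) = 1) ↔ True from by decide,
      if_true, if_false, true_and, false_and, false_or, or_false] <;>
    omega
theorem source_lemma (h : ℕ) (hh : 2 ≤ h) :
    IsSlInfSource (2 * h - 1) (-(h : ℤ), 0) (emptyPartition, emptyPartition) := by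
  constructor
  · rw [abacus_empty h]
    exact ⟨Qseq h 0, per h hh 0⟩
  · rintro lam ⟨k, hTP1, hTP2, P, ⟨R, hR, hRk⟩, hEq, -⟩
    subst hRk
    obtain ⟨x, r, hPform, hbeads, -, -, -⟩ := hR k le_rfl
    set e := 2 * h - 1 with hedef
    have he1 : 1 ≤ e := by omega
    set ρ := r (e - 1) with hρdef
    have hbotP : ((x - ((e - 1 : ℕ) : ℤ), ρ) : ℤ × Fin 2) ∈ R k := by
      rw [hPform]; exact ⟨e - 1, by omega, rfl⟩
    have hshift : ((x - ((e - 1 : ℕ) : ℤ) + 1, ρ) : ℤ × Fin 2) ∈ shiftRight (R k) := by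
      simp only [shiftRight, Set.mem_setOf_eq, add_sub_cancel_right]
      exact hbotP
    have hshiftA0 : ((x - ((e - 1 : ℕ) : ℤ) + 1, ρ) : ℤ × Fin 2) ∈ modelAb h 0 := by
      rw [← abacus_empty h, hEq]
      exact Or.inr hshift
    have hbotA0 : ((x - ((e - 1 : ℕ) : ℤ), ρ) : ℤ × Fin 2) ∈ modelAb h 0 := by
      simp only [modelAb, Set.mem_setOf_eq, Tf_zero, Bf_zero] at hshiftA0 ⊢
      rcases fin2cases ρ with hr | hr <;> rw [hr] at hshiftA0 ⊢ <;>
        simp only [show ((0 : Fin 2) = 0) ↔ True from by decide,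
          show ((1 : Fin 2) = 0) ↔ False from by decide, if_true, if_false] at hshiftA0 ⊢ <;>
        push_cast at hshiftA0 ⊢ <;> omega
    rw [← abacus_empty h, hEq] at hbotA0
    rcases hbotA0 with hmem | hmem
    · exact hmem.2 hbotP
    · rw [shiftRight, Set.mem_setOf_eq, hPform] at hmem
      obtain ⟨i, hi, heqq⟩ := hmem
      rw [Prod.mk.injEq] at heqq
      have := heqq.1
      omega
theorem twoRows_removeHook (n : ℕ) :
    RemoveHook 2 (threeTwoOne 0 (n + 1) 0) (threeTwoOne 0 n 0) := by
  refine ⟨2 - (n : ℤ), ?_, ?_, ?_⟩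
  · rw [mem_twoRows_beta]; push_cast; omega
  · rw [mem_twoRows_beta]; push_cast; omega
  · ext z
    simp only [Set.mem_insert_iff, Set.mem_diff, Set.mem_singleton_iff, mem_twoRows_beta]
    push_cast; omega

theorem emptyP_eq : threeTwoOne 0 0 0 = staircase 0 := by
  refine Partition.ext' (funext fun j => ?_)
  simp [threeTwoOne, staircase]

theorem twoRows_chain (m : ℕ) :
    Relation.ReflTransGen (RemoveHook 2) (threeTwoOne 0 m 0) (staircase 0) := by
  induction m with
  | zero => rw [emptyP_eq]
  | succ n ih => exact Relation.ReflTransGen.head (twoRows_removeHook n) ih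

theorem staircase0_core : IsECore 2 (staircase 0) := by
  rintro mu ⟨x, hx, hx2, -⟩
  rw [mem_staircase0_beta] at hx
  exact hx2 (by rw [mem_staircase0_beta]; push_cast; omega)
/-- For `e ≥ 3` odd and `k ≥ 1` (with `ε = 0` if `k` even, `1` if `k`
odd): `τ(2^{ek}) = |(1^{⌊ek/2⌋}, 1^{⌊ek/2⌋+ε}), (-(e+1)/2, 0)⟩`, and this charged
bipartition is obtained from the abacus of the charged empty bipartition by moving each
of its first `k` `e`-periods one step to the right; in particular it has depth `k` in
the `sl_∞`-crystal, lying in the connected component whose source vertex is the empty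
bipartition. -/
theorem twisted_quotient_two_rows
    (e k : ℕ) (he : Odd e) (he3 : 3 ≤ e) (hk : 1 ≤ k)
    (eps : ℕ) (heps : eps = if k % 2 = 0 then 0 else 1)
    (s : ℤ × ℤ) (hs : s = (-(((e : ℤ) + 1) / 2), 0))
    (bp : Partition × Partition)
    (hbp : bp = (column (e * k / 2), column (e * k / 2 + eps))) :
    tauCharge e 0 = s ∧
    IsTwistedQuotient 0 (threeTwoOne 0 (e * k) 0) bp ∧
    (∃ P : ℕ → Set (ℤ × Fin 2),
      IsPeriodSeq e (abacus (emptyPartition, emptyPartition) s) P ∧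
      abacus bp s =
        ((abacus (emptyPartition, emptyPartition) s) \ ⋃ i ∈ Finset.range k, P i) ∪
          ⋃ i ∈ Finset.range k, shiftRight (P i)) ∧
    IsSlInfSource e s (emptyPartition, emptyPartition) ∧
    (∃ c : ℕ → Partition × Partition,
      c 0 = (emptyPartition, emptyPartition) ∧ c k = bp ∧
      ∀ j : ℕ, j < k → SlInfEdge e s (c j) (c (j + 1))) := by
  obtain ⟨d, hd⟩ := he
  have he' : e = 2 * (d + 1) - 1 := by omega
  subst he'
  set h := d + 1 with hhdef
  have hh : 2 ≤ h := by omega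
  -- rewrite the charge
  have hs' : s = (-(h : ℤ), 0) := by
    rw [hs, Prod.mk.injEq]
    constructor
    · omega
    · rfl
  clear hs
  subst hs'
  -- numeric facts
  have heps' : eps = k % 2 := by rw [heps]; split_ifs with hp <;> omega
  obtain ⟨hTBsum, hTBdiff⟩ := TB_total h hh k
  have hBk : Bf h k = (2 * h - 1) * k / 2 := by omega
  have hTk : Tf h k = (2 * h - 1) * k / 2 + eps := by omega
  -- rewrite the bipartition
  have hbp' : bp = (column (Bf h k), column (Tf h k)) := by rw [hbp, hBk, hTk]
  clear hbp
  subst hbp'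
  refine ⟨?_, ⟨⟨twoRows_chain _, staircase0_core⟩, ?_⟩, ?_, source_lemma h hh, ?_⟩
  · -- tauCharge
    unfold tauCharge
    rw [if_pos (show (0 : ℕ) % 2 = 0 from rfl), Prod.mk.injEq]
    constructor
    · push_cast; omega
    · norm_num
  · -- two-quotient
    rw [if_pos (show (0 : ℕ) % 2 = 0 from rfl)]
    constructor
    · refine ⟨0, ?_⟩
      ext z
      rw [mem_column_chargedBeta]
      simp only [Set.mem_setOf_eq, mem_twoRows_beta]
      omega
    · refine ⟨0, ?_⟩
      ext z
      rw [mem_column_chargedBeta]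
      simp only [Set.mem_setOf_eq, mem_twoRows_beta]
      omega
  · -- abacus equation
    refine ⟨Qseq h 0, ?_, ?_⟩
    · rw [abacus_empty h]
      exact per h hh 0
    · rw [abacus_model h k, abacus_empty h,
        show (⋃ i ∈ Finset.range k, Qseq h 0 i) = ⋃ i ∈ Finset.range k, periodP h i from
          Set.iUnion₂_congr fun i _ => Qseq_zero h i,
        show (⋃ i ∈ Finset.range k, shiftRight (Qseq h 0 i)) =
            ⋃ i ∈ Finset.range k, shiftRight (periodP h i) from
          Set.iUnion₂_congr fun i _ => by rw [Qseq_zero h i]]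
      exact main_union h hh k
  · -- the crystal chain
    refine ⟨fun j => (column (Bf h j), column (Tf h j)), ?_, rfl, ?_⟩
    · show (column (Bf h 0), column (Tf h 0)) = _
      rw [show Bf h 0 = 0 from rfl, show Tf h 0 = 0 from rfl, Prod.mk.injEq]
      have hc0 : column 0 = emptyPartition := by
        refine Partition.ext' (funext fun j => ?_)
        rw [column_part]
        simp [emptyPartition]
      exact ⟨hc0, hc0⟩
    · intro j hj
      refine ⟨j, ?_⟩
      show SlInfEdgeAt (2 * h - 1) (-(h : ℤ), 0) j
        (column (Bf h j), column (Tf h j)) (column (Bf h (j + 1)), column (Tf h (j + 1)))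
      unfold SlInfEdgeAt
      rw [abacus_model h j, abacus_model h (j + 1)]
      exact ⟨⟨Qseq h j, per h hh j⟩, ⟨Qseq h (j + 1), per h hh (j + 1)⟩, periodP h j,
        ⟨Qseq h j, fun i _ => per h hh j i, Qseq_self h j⟩, edge_union h hh j,
        ⟨Qseq h (j + 1), fun i _ => per h hh (j + 1) i, Qseq_lt h (j + 1) j (by omega)⟩⟩

end GUnBranching
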